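/- Let V be a non-negative closed densely defined symmetric operator on a complex Hilbert space H, and let W_K be a non-negative selfadjoint operator such that W_K∘W_K is a non-negative selfadjoint extension of V, D(W_K) = { h ∈ H : sup{ |⟨h, Vf⟩|²/⟨f, Vf⟩ : f ∈ D(V), Vf ≠ 0 } < ∞ }, and ‖W_K h‖² equals this supremum for every h ∈ D(W_K) (i.e., W_K = V_K^{1/2}, the square root of the Kreĭn–von Neumann extension of V, by the Ando–Nishio characterization). Then ran(W_K↾_{D(V)}) = {W_K f : f ∈ D(V)} is dense in the closure of ran(W_K). -/

import Mathlib

noncomputable section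

open Complex

variable {H : Type*} [NormedAddCommGroup H] [InnerProductSpace ℂ H] [CompleteSpace H]

local notation "⟪" x ", " y "⟫" => @inner ℂ _ _ x y

/-- A partially defined operator is *dissipative* if `Im ⟪ψ, A ψ⟫ ≥ 0` for all `ψ` in its
domain. -/
def Dissipative (A : H →ₗ.[ℂ] H) : Prop :=
  ∀ ψ : A.domain, 0 ≤ (⟪(ψ : H), A ψ⟫).im

/-- A partially defined operator is *symmetric* if `⟪f, S g⟫ = ⟪S f, g⟫` on its domain. -/
def IsSymmetricP (S : H →ₗ.[ℂ] H) : Prop :=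
  ∀ f g : S.domain, ⟪(f : H), S g⟫ = ⟪S f, (g : H)⟫

/-- A partially defined operator is *non-negative* if `⟪f, V f⟫` is real and `≥ 0` on its
domain. -/
def NonnegP (V : H →ₗ.[ℂ] H) : Prop :=
  ∀ f : V.domain, (⟪(f : H), V f⟫).im = 0 ∧ 0 ≤ (⟪(f : H), V f⟫).re

/-- `T = W ∘ W` as partially defined operators: the domain of `T` is
`{x ∈ D(W) : W x ∈ D(W)}` and there `T x = W (W x)`. -/
def IsSqrtOf (W T : H →ₗ.[ℂ] H) : Prop :=
  (∀ x : H, x ∈ T.domain ↔ ∃ hx : x ∈ W.domain, W ⟨x, hx⟩ ∈ W.domain) ∧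
  ∀ (x : H) (hxT : x ∈ T.domain) (hxW : x ∈ W.domain) (hWx : W ⟨x, hxW⟩ ∈ W.domain),
    T ⟨x, hxT⟩ = W ⟨W ⟨x, hxW⟩, hWx⟩

/-- The Ando–Nishio supremum `sup { |⟪h, V f⟫|² / ⟪f, V f⟫ : f ∈ D(V), V f ≠ 0 }`,
computed in `[0, ∞]`. -/
def anSup (V : H →ₗ.[ℂ] H) (h : H) : ENNReal :=
  ⨆ f : {f : V.domain // V f ≠ 0},
    ENNReal.ofReal (‖⟪h, V f.1⟫‖ ^ 2) / ENNReal.ofReal ((⟪(f.1 : H), V f.1⟫).re)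

/-- `W` is the square root of the Kreĭn–von Neumann extension of `V` (Ando–Nishio
characterization): `W` is a non-negative selfadjoint operator, `W ∘ W` is a non-negative
selfadjoint extension of `V`, the domain of `W` consists exactly of those `h` with
`anSup V h < ∞`, and `‖W h‖² = anSup V h` there. -/
def IsKreinSqrt (V W : H →ₗ.[ℂ] H) : Prop :=
  IsSelfAdjoint W ∧ NonnegP W ∧
    (∃ T : H →ₗ.[ℂ] H, IsSqrtOf W T ∧ IsSelfAdjoint T ∧ NonnegP T ∧ V ≤ T) ∧
    (∀ h : H, h ∈ W.domain ↔ anSup V h < ⊤) ∧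
    ∀ (h : H) (hh : h ∈ W.domain), ENNReal.ofReal (‖W ⟨h, hh⟩‖ ^ 2) = anSup V h

/-- For a non-negative closed densely defined symmetric operator `V`, the
range of `V_K^{1/2}` restricted to `D(V)` is dense in the closure of `ran (V_K^{1/2})`. -/
theorem statement5
    (V WK : H →ₗ.[ℂ] H)
    (hVdense : Dense (V.domain : Set H)) (hVclosed : V.IsClosed)
    (hVsymm : IsSymmetricP V) (hVnn : NonnegP V)
    (hWK : IsKreinSqrt V WK) :
    closure {y : H | ∃ (f : H) (_ : f ∈ V.domain) (hfW : f ∈ WK.domain), WK ⟨f, hfW⟩ = y}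
      = closure (Set.range fun g : WK.domain => WK g) := by
  obtain ⟨hsa, hWnn, ⟨T, hsqrt, hTsa, hTnn, hVT⟩, hdomW, hnormW⟩ := hWK
  have hDense : Dense (WK.domain : Set H) := hsa.dense_domain
  have hadj : WK.adjoint = WK := LinearPMap.isSelfAdjoint_def.mp hsa
  have hform : WK.IsFormalAdjoint WK := by
    have h := LinearPMap.adjoint_isFormalAdjoint hDense
    rwa [hadj] at h
  have hsubW : V.domain ≤ WK.domain := by
    intro x hx
    obtain ⟨h1, _⟩ := (hsqrt.1 x).mp (hVT.1 hx)
    exact h1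
  -- the key identity: ⟪g, V f⟫ = ⟪WK g, WK f⟫ for f ∈ D(V), g ∈ D(WK)
  have key : ∀ (f : V.domain) (g : WK.domain),
      ⟪(g : H), V f⟫ = ⟪WK g, WK ⟨(f : H), hsubW f.2⟩⟫ := by
    intro f g
    obtain ⟨hfW, hWf⟩ := (hsqrt.1 (f : H)).mp (hVT.1 f.2)
    have h1 : V f = T ⟨(f : H), hVT.1 f.2⟩ := hVT.2 rfl
    have h2 : T ⟨(f : H), hVT.1 f.2⟩ = WK ⟨WK ⟨(f : H), hfW⟩, hWf⟩ :=
      hsqrt.2 (f : H) (hVT.1 f.2) hfW hWf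
    rw [h1, h2]
    exact (hform g ⟨_, hWf⟩).symm
  have keynn : ∀ f : V.domain,
      (⟪(f : H), V f⟫).re = ‖WK ⟨(f : H), hsubW f.2⟩‖ ^ 2 := by
    intro f
    have := key f ⟨(f : H), hsubW f.2⟩
    rw [this, inner_self_eq_norm_sq_to_K]
    simp [← Complex.ofReal_pow]
  -- the range of WK restricted to D(V), as a submodule
  set L : V.domain →ₗ[ℂ] H := WK.toFun.comp (Submodule.inclusion hsubW) with hL
  set Msub : Submodule ℂ H := LinearMap.range L with hMsub
  have hMset : (Msub : Set H)
      = {y : H | ∃ (f : H) (_ : f ∈ V.domain) (hfW : f ∈ WK.domain), WK ⟨f, hfW⟩ = y} := by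
    ext y
    simp only [hMsub, SetLike.mem_coe, LinearMap.mem_range, hL, LinearMap.coe_comp,
      Function.comp_apply, Set.mem_setOf_eq]
    constructor
    · rintro ⟨f, rfl⟩
      exact ⟨(f : H), f.2, hsubW f.2, rfl⟩
    · rintro ⟨f, hf, hfW, rfl⟩
      exact ⟨⟨f, hf⟩, rfl⟩
  set K : Submodule ℂ H := Msub.topologicalClosure with hK
  haveI : CompleteSpace K := Msub.isClosed_topologicalClosure.completeSpace_coe
  -- main claim : WK g ∈ K for every g ∈ D(WK)
  have main : ∀ g : WK.domain, WK g ∈ K := by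
    intro g
    set v : H := WK g with hv
    set u : H := (K.orthogonalProjection v : H) with hu
    have hvK : v - u ∈ Kᗮ := K.sub_starProjection_mem_orthogonal v
    have hinner : ∀ m ∈ Msub, ⟪v, m⟫ = ⟪u, m⟫ := by
      intro m hm
      have hmK : m ∈ K := Submodule.le_topologicalClosure _ hm
      have h0 : ⟪m, v - u⟫ = 0 := (Submodule.mem_orthogonal _ _).mp hvK m hmK
      have h0' : ⟪v - u, m⟫ = 0 := by
        rw [← inner_conj_symm, h0, map_zero]
      rw [inner_sub_left] at h0'
      linear_combination (norm := module) h0'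
    have hb : anSup V (g : H) ≤ ENNReal.ofReal (‖u‖ ^ 2) := by
      apply iSup_le
      rintro ⟨f, hVf⟩
      set Wf : H := WK ⟨(f : H), hsubW f.2⟩ with hWfdef
      have hWfM : Wf ∈ Msub := ⟨f, rfl⟩
      have hnum : ⟪(g : H), V f⟫ = ⟪u, Wf⟫ := by
        rw [key f g, ← hv]
        exact hinner Wf hWfM
      have hden : (⟪(f : H), V f⟫).re = ‖Wf‖ ^ 2 := keynn f
      have hWfne : Wf ≠ 0 := by
        intro h0
        apply hVf
        obtain ⟨hfW, hWf⟩ := (hsqrt.1 (f : H)).mp (hVT.1 f.2)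
        have h1 : V f = T ⟨(f : H), hVT.1 f.2⟩ := hVT.2 rfl
        have h2 : T ⟨(f : H), hVT.1 f.2⟩ = WK ⟨WK ⟨(f : H), hfW⟩, hWf⟩ :=
          hsqrt.2 (f : H) (hVT.1 f.2) hfW hWf
        rw [h1, h2]
        have hz : (⟨WK ⟨(f : H), hfW⟩, hWf⟩ : WK.domain) = 0 := by
          ext
          exact h0
        rw [hz, LinearPMap.map_zero]
      have hle : ‖⟪(g : H), V f⟫‖ ^ 2 ≤ ‖u‖ ^ 2 * (⟪(f : H), V f⟫).re := by
        rw [hnum, hden]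
        have := norm_inner_le_norm (𝕜 := ℂ) u Wf
        nlinarith [norm_nonneg u, norm_nonneg Wf, norm_nonneg (⟪u, Wf⟫)]
      apply ENNReal.div_le_of_le_mul
      calc ENNReal.ofReal (‖⟪(g : H), V f⟫‖ ^ 2)
          ≤ ENNReal.ofReal (‖u‖ ^ 2 * (⟪(f : H), V f⟫).re) := ENNReal.ofReal_le_ofReal hle
        _ = ENNReal.ofReal (‖u‖ ^ 2) * ENNReal.ofReal ((⟪(f : H), V f⟫).re) :=
            ENNReal.ofReal_mul (by positivity)
    have hv2 : ENNReal.ofReal (‖v‖ ^ 2) = anSup V (g : H) := hnormW (g : H) g.2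
    have hle2 : ‖v‖ ^ 2 ≤ ‖u‖ ^ 2 :=
      (ENNReal.ofReal_le_ofReal_iff (by positivity)).mp (hv2 ▸ hb)
    have huK : u ∈ K := (K.orthogonalProjection v).2
    have h0 : ⟪u, v - u⟫ = 0 := (Submodule.mem_orthogonal _ _).mp hvK u huK
    have hdecomp : ‖v‖ ^ 2 = ‖u‖ ^ 2 + ‖v - u‖ ^ 2 := by
      have hsum : u + (v - u) = v := by abel
      have := norm_add_sq (𝕜 := ℂ) u (v - u)
      rw [hsum, h0] at this
      simpa using this
    have : v = u := by
      have : ‖v - u‖ = 0 := by nlinarith [norm_nonneg (v - u)]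
      have := norm_eq_zero.mp this
      linear_combination (norm := module) this
    exact this ▸ huK
  -- conclude
  have hKclos : (K : Set H)
      = closure {y : H | ∃ (f : H) (_ : f ∈ V.domain) (hfW : f ∈ WK.domain), WK ⟨f, hfW⟩ = y} := by
    rw [hK, Submodule.topologicalClosure_coe, hMset]
  apply le_antisymm
  · apply closure_mono
    rintro y ⟨f, hf, hfW, rfl⟩
    exact ⟨⟨f, hfW⟩, rfl⟩
  · rw [← closure_closure
      (s := {y : H | ∃ (f : H) (_ : f ∈ V.domain) (hfW : f ∈ WK.domain), WK ⟨f, hfW⟩ = y})]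
    apply closure_mono
    rintro y ⟨g, rfl⟩
    rw [← hKclos]
    exact main g
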